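/- Let q ≥ 2 be an integer, let G be a partially q-colored graph with a free vertex v, and let w ∈ [0,1] be such that Z_G(w) > 0, Z_{G^{+1}}(w) > 0 and Z_{G^{+q}}(w) > 0. Let x ∈ ℂ^{q−1} and define x̂ ∈ ℂ^{q−1} by x̂_1 = −x_1 and x̂_j = x_j − x_1 for j = 2,…,q−1. Let ⟨P_{G,v}(w), x⟩ := Σ_{j=1}^{q−1} P_{G,v;j}(w)·x_j. Then: if Z^1_{G,v}(w) ≤ Z^q_{G,v}(w), one has |⟨P_{G,v}(w), x⟩| ≤ (1−w)·P_{G^{+1},w}[Φ(v)=q]·‖x‖_∞; and if Z^1_{G,v}(w) > Z^q_{G,v}(w), one has |⟨P_{G,v}(w), x⟩| ≤ (1−w)·P_{G^{+q},w}[Φ(v)=1]·‖x̂‖_∞. -/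

import Mathlib

attribute [local instance 10] Classical.propDecidable

noncomputable section

/-- A partially `q`-colored graph: a finite simple graph together with a set `S` of
pinned vertices and a pinning `pin` (only its values on `S` are relevant). -/
structure PCG (q : ℕ) where
  V : Type
  fin : Fintype V
  G : SimpleGraph V
  S : Finset V
  pin : V → Fin q

namespace PCG

variable {q : ℕ}

instance (H : PCG q) : Fintype H.V := H.fin

/-- colorings agreeing with the pinning on the pinned set -/
def admissible (H : PCG q) (ψ : H.V → Fin q) : Prop :=
  ∀ u ∈ H.S, ψ u = H.pin u

/-- the number of monochromatic edges of a coloring -/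
def mono (H : PCG q) (ψ : H.V → Fin q) : ℕ :=
  ((Finset.univ : Finset (Sym2 H.V)).filter
    (fun e => e ∈ H.G.edgeSet ∧ (e.map ψ).IsDiag)).card

/-- the (complex) Potts partition function of a partially colored graph -/
def Z (H : PCG q) (w : ℂ) : ℂ :=
  ∑ ψ ∈ Finset.univ.filter (fun ψ : H.V → Fin q => H.admissible ψ), w ^ H.mono ψ

/-- the partition function restricted to colorings giving `v` the color `j` -/
def Zc (H : PCG q) (v : H.V) (j : Fin q) (w : ℂ) : ℂ :=
  ∑ ψ ∈ Finset.univ.filter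
      (fun ψ : H.V → Fin q => H.admissible ψ ∧ ψ v = j), w ^ H.mono ψ

/-- the real Potts partition function -/
def Zr (H : PCG q) (w : ℝ) : ℝ :=
  ∑ ψ ∈ Finset.univ.filter (fun ψ : H.V → Fin q => H.admissible ψ), w ^ H.mono ψ

/-- the real partition function restricted to colorings giving `v` the color `j` -/
def Zcr (H : PCG q) (v : H.V) (j : Fin q) (w : ℝ) : ℝ :=
  ∑ ψ ∈ Finset.univ.filter
      (fun ψ : H.V → Fin q => H.admissible ψ ∧ ψ v = j), w ^ H.mono ψ

/-- the marginal probability that `v` receives the color `j` -/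
def Pr (H : PCG q) (v : H.V) (j : Fin q) (w : ℝ) : ℝ :=
  H.Zcr v j w / H.Zr w

/-- the neighborhood of a vertex -/
def nbhd (H : PCG q) (v : H.V) : Finset H.V :=
  Finset.univ.filter (fun u => H.G.Adj v u)

/-- the degree of a vertex -/
def deg (H : PCG q) (v : H.V) : ℕ := (H.nbhd v).card

/-- the free degree of a vertex: its number of free neighbors -/
def freeDeg (H : PCG q) (v : H.V) : ℕ :=
  ((H.nbhd v).filter (fun u => u ∉ H.S)).card

/-- the number of pinned neighbors of `v` colored `j` -/
def cvec (H : PCG q) (v : H.V) (j : Fin q) : ℕ :=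
  ((H.nbhd v).filter (fun u => u ∈ H.S ∧ H.pin u = j)).card

/-- the color `j` is blocked at `v`: some pinned neighbor of `v` is colored `j` -/
def blockedAt (H : PCG q) (v : H.V) (j : Fin q) : Prop :=
  ∃ u ∈ H.nbhd v, u ∈ H.S ∧ H.pin u = j

/-- the set of colors that are free at `v` -/
def freeColors (H : PCG q) (v : H.V) : Finset (Fin q) :=
  Finset.univ.filter (fun j => ¬ H.blockedAt v j)

/-- the graph has maximum degree at most `Δ` -/
def maxDegLE (H : PCG q) (Δ : ℕ) : Prop := ∀ u, H.deg u ≤ Δ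

/-- the class 𝒢•: `H` is connected, has max degree at most `Δ`, its pinned vertices
are leaves and form an independent set, and `v` is a free vertex -/
def GoodPair (Δ : ℕ) (H : PCG q) (v : H.V) : Prop :=
  H.G.Connected ∧ H.maxDegLE Δ ∧ (∀ u ∈ H.S, H.deg u = 1) ∧
    (∀ u ∈ H.S, ∀ u' ∈ H.S, ¬ H.G.Adj u u') ∧ v ∉ H.S

/-- `Ḡ`: the graph obtained by deleting all pinned neighbors of `v` -/
def bar (H : PCG q) (v : H.V) : PCG q where
  V := ↥{u : H.V | ¬(u ∈ H.S ∧ H.G.Adj v u)}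
  fin := inferInstance
  G := H.G.induce {u : H.V | ¬(u ∈ H.S ∧ H.G.Adj v u)}
  S := Finset.univ.filter (fun u => u.1 ∈ H.S)
  pin := fun u => H.pin u.1

/-- the vertex `v` viewed as a vertex of `Ḡ` -/
def barVert (H : PCG q) (v : H.V) : (H.bar v).V :=
  ⟨v, fun h => H.G.irrefl h.2⟩

/-- `G − v`: the graph obtained by deleting the vertex `v` -/
def deleteVert (H : PCG q) (v : H.V) : PCG q where
  V := ↥{u : H.V | u ≠ v}
  fin := inferInstance
  G := H.G.induce {u : H.V | u ≠ v}
  S := Finset.univ.filter (fun u => u.1 ∈ H.S)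
  pin := fun u => H.pin u.1

/-- `G^{+ℓ}`: attach a new pinned leaf of color `ℓ` to the vertex `v` -/
def addLeaf (H : PCG q) (v : H.V) (ℓ : Fin q) : PCG q where
  V := Option H.V
  fin := inferInstance
  G := SimpleGraph.fromRel (fun a b =>
    (∃ u u' : H.V, a = some u ∧ b = some u' ∧ H.G.Adj u u') ∨ (a = none ∧ b = some v))
  S := insert none (H.S.image some)
  pin := fun a => a.elim ℓ H.pin

/-- the complex log-ratio `R_{G,v;i,j}` -/
def logRatio (H : PCG q) (v : H.V) (i j : Fin q) (w : ℂ) : ℂ :=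
  Complex.log (H.Zc v i w / H.Zc v j w)

/-- the vector `P_{G,v}(w) ∈ ℝ^{q−1}` of marginal differences -/
def Pvec (H : PCG q) (v : H.V) (w : ℝ) (j : Fin (q - 1)) : ℝ :=
  (H.addLeaf v ⟨0, by have := j.2; omega⟩).Pr (some v) (Fin.castLE (Nat.sub_le q 1) j) w -
  (H.addLeaf v ⟨q - 1, by have := j.2; omega⟩).Pr (some v) (Fin.castLE (Nat.sub_le q 1) j) w

/-- the graph `Ĝ_i` of the telescoping procedure: delete `v` from `G`, attach to the
`j`-th neighbor of `v` (for `j ≠ i`) a pinned leaf colored `ℓ₂` if `j < i` and `ℓ₁`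
if `j > i`, and attach a free leaf (the vertex `Sum.inr i`) to the `i`-th neighbor. -/
def telescope (H : PCG q) (v : H.V) {d : ℕ} (nbrs : Fin d → H.V)
    (ℓ₁ ℓ₂ : Fin q) (i : Fin d) : PCG q where
  V := ↥{u : H.V | u ≠ v} ⊕ Fin d
  fin := inferInstance
  G := SimpleGraph.fromRel (fun a b =>
    (∃ u u' : ↥{u : H.V | u ≠ v}, a = Sum.inl u ∧ b = Sum.inl u' ∧ H.G.Adj u.1 u'.1) ∨
    (∃ (u : ↥{u : H.V | u ≠ v}) (j : Fin d), a = Sum.inl u ∧ b = Sum.inr j ∧ u.1 = nbrs j))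
  S := (Finset.univ.filter (fun u : ↥{u : H.V | u ≠ v} => u.1 ∈ H.S)).image Sum.inl ∪
       (Finset.univ.filter (fun j : Fin d => j ≠ i)).image Sum.inr
  pin := Sum.elim (fun u => H.pin u.1) (fun j => if (j : ℕ) < (i : ℕ) then ℓ₂ else ℓ₁)

end PCG

/-- extend a vector indexed by `Fin (q-1)` to `Fin q` by a zero last coordinate -/
def extendLast (q : ℕ) (x : Fin (q - 1) → ℂ) : Fin q → ℂ :=
  fun j => if h : (j : ℕ) < q - 1 then x ⟨j, h⟩ else 0

/-- the polynomial `P_c(w,x) = w^{c₁+1}e^{x₁} + Σ_{j=2}^{q−1} w^{c_j}e^{x_j} + w^{c_q}` -/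
def Ppoly (q : ℕ) (c : Fin q → ℕ) (w : ℂ) (x : Fin (q - 1) → ℂ) : ℂ :=
  ∑ j : Fin q, w ^ (c j + if (j : ℕ) = 0 then 1 else 0) * Complex.exp (extendLast q x j)

/-- the polynomial `Q_c(w,x) = w^{c₁}e^{x₁} + Σ_{j=2}^{q−1} w^{c_j}e^{x_j} + w^{c_q+1}` -/
def Qpoly (q : ℕ) (c : Fin q → ℕ) (w : ℂ) (x : Fin (q - 1) → ℂ) : ℂ :=
  ∑ j : Fin q, w ^ (c j + if (j : ℕ) = q - 1 then 1 else 0) * Complex.exp (extendLast q x j)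

/-- the map `F_{w,c}(x) = Log (P_c(w,x)/Q_c(w,x))` -/
def Fmap (q : ℕ) (c : Fin q → ℕ) (w : ℂ) (x : Fin (q - 1) → ℂ) : ℂ :=
  Complex.log (Ppoly q c w x / Qpoly q c w x)

/-- real version of `extendLast` -/
def extendLastR (q : ℕ) (x : Fin (q - 1) → ℝ) : Fin q → ℝ :=
  fun j => if h : (j : ℕ) < q - 1 then x ⟨j, h⟩ else 0

/-- real version of `Ppoly` -/
def PpolyR (q : ℕ) (c : Fin q → ℕ) (w : ℝ) (x : Fin (q - 1) → ℝ) : ℝ :=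
  ∑ j : Fin q, w ^ (c j + if (j : ℕ) = 0 then 1 else 0) * Real.exp (extendLastR q x j)

/-- real version of `Qpoly` -/
def QpolyR (q : ℕ) (c : Fin q → ℕ) (w : ℝ) (x : Fin (q - 1) → ℝ) : ℝ :=
  ∑ j : Fin q, w ^ (c j + if (j : ℕ) = q - 1 then 1 else 0) * Real.exp (extendLastR q x j)

/-- real version of `Fmap`, i.e. `F_{w,c}` viewed as a real function on `ℝ^{q−1}` -/
def FmapR (q : ℕ) (c : Fin q → ℕ) (w : ℝ) (x : Fin (q - 1) → ℝ) : ℝ :=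
  Real.log (PpolyR q c w x / QpolyR q c w x)

namespace PCG
variable {q : ℕ}

lemma Zr_eq_sum_Zcr (H : PCG q) (v : H.V) (w : ℝ) :
    H.Zr w = ∑ j : Fin q, H.Zcr v j w := by
  unfold Zr Zcr
  rw [← Finset.sum_fiberwise (Finset.univ.filter (fun ψ : H.V → Fin q => H.admissible ψ))
    (fun ψ => ψ v) (fun ψ => w ^ H.mono ψ)]
  refine Finset.sum_congr rfl fun j _ => Finset.sum_congr ?_ fun _ _ => rfl
  rw [Finset.filter_filter]


lemma mono_addLeaf (H : PCG q) (v : H.V) (ℓ : Fin q) (ψ : H.V → Fin q)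
    (ψ' : Option H.V → Fin q) (h : ∀ u, ψ' (some u) = ψ u) (h0 : ψ' none = ℓ) :
    (H.addLeaf v ℓ).mono ψ' = H.mono ψ + (if ψ v = ℓ then 1 else 0) := by
  have hinj : Function.Injective (Sym2.map (some : H.V → Option H.V)) :=
    Sym2.map.injective (Option.some_injective _)
  have hset : (Finset.univ.filter
        (fun e : Sym2 (Option H.V) => e ∈ (H.addLeaf v ℓ).G.edgeSet ∧ (e.map ψ').IsDiag))
      = ((Finset.univ.filter
          (fun e : Sym2 H.V => e ∈ H.G.edgeSet ∧ (e.map ψ).IsDiag)).image (Sym2.map some))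
        ∪ (if ψ v = ℓ then {s(none, some v)} else ∅) := by
    ext e
    induction e using Sym2.ind with
    | _ a b =>
      simp only [Finset.mem_filter, Finset.mem_univ, true_and, Finset.mem_union, Finset.mem_image]
      simp only [Finset.mem_filter, Finset.mem_univ, true_and, Finset.mem_union,
        Finset.mem_image, SimpleGraph.mem_edgeSet, Sym2.map_pair_eq, Sym2.isDiag_iff_proj_eq,
        addLeaf, SimpleGraph.fromRel_adj]
      constructor
      · rintro ⟨⟨hne, (⟨u, u', rfl, rfl, huu⟩ | ⟨rfl, rfl⟩) | (⟨u, u', rfl, rfl, huu⟩ | ⟨rfl, rfl⟩)⟩,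
          hdiag⟩
        · left
          refine ⟨s(u, u'), ⟨huu, ?_⟩, rfl⟩
          simpa [h] using hdiag
        · right
          have hv : ψ v = ℓ := by
            have := hdiag
            simp only [h, h0] at this
            exact this.symm
          simp [hv]
        · left
          refine ⟨s(u, u'), ⟨huu, ?_⟩, by simp [Sym2.eq_swap]⟩
          have := hdiag
          simp only [h] at this
          exact this.symm
        · right
          have hv : ψ v = ℓ := by
            have := hdiag
            simp only [h, h0] at this
            exact this
          simp [hv, Sym2.eq_swap]
      · rintro (⟨e, ⟨hadj, hdiag⟩, heq⟩ | hmem)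
        · induction e using Sym2.ind with
          | _ u u' =>
            simp only [Sym2.map_pair_eq, Sym2.isDiag_iff_proj_eq] at hdiag
            rw [Sym2.map_pair_eq, Sym2.eq_iff] at heq
            rcases heq with ⟨rfl, rfl⟩ | ⟨rfl, rfl⟩
            · exact ⟨⟨by simp [hadj.ne], Or.inl (Or.inl ⟨u, u', rfl, rfl, hadj⟩)⟩,
                by simp [h, hdiag]⟩
            · exact ⟨⟨by simp [hadj.ne'], Or.inl (Or.inl ⟨u', u, rfl, rfl, hadj.symm⟩)⟩,
                by simp [h, hdiag]⟩
        · by_cases hψ : ψ v = ℓ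
          · simp only [hψ, if_true, Finset.mem_singleton, Sym2.eq_iff] at hmem
            rcases hmem with ⟨rfl, rfl⟩ | ⟨rfl, rfl⟩
            · exact ⟨⟨by simp, Or.inl (Or.inr ⟨rfl, rfl⟩)⟩, by simp [h, h0, hψ]⟩
            · exact ⟨⟨by simp, Or.inr (Or.inr ⟨rfl, rfl⟩)⟩, by simp [h, h0, hψ]⟩
          · simp [hψ] at hmem
  have hdisj : Disjoint
      ((Finset.univ.filter
          (fun e : Sym2 H.V => e ∈ H.G.edgeSet ∧ (e.map ψ).IsDiag)).image (Sym2.map some))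
      (if ψ v = ℓ then ({s(none, some v)} : Finset (Sym2 (Option H.V))) else ∅) := by
    rw [Finset.disjoint_right]
    intro e he
    split at he
    · simp only [Finset.mem_singleton] at he
      subst he
      simp only [Finset.mem_image, not_exists, not_and]
      rintro e' - hmap
      induction e' using Sym2.ind with
      | _ u u' =>
        rw [Sym2.map_pair_eq, Sym2.eq_iff] at hmap
        rcases hmap with ⟨h1, -⟩ | ⟨-, h1⟩ <;> exact nomatch h1
    · simp at he
  have hcard := congrArg Finset.card hset
  rw [Finset.card_union_of_disjoint hdisj, Finset.card_image_of_injective _ hinj] at hcard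
  have hone : (if ψ v = ℓ then ({s(none, some v)} : Finset (Sym2 (Option H.V))) else ∅).card
      = if ψ v = ℓ then 1 else 0 := by split <;> simp
  rw [hone] at hcard
  unfold mono
  refine Eq.trans ?_ (hcard.trans ?_)
  · congr 1
    ext e
    exact ⟨fun h => (@Finset.mem_filter (Sym2 (Option H.V)) _ _ _ _).2 ⟨Finset.mem_univ _, (Finset.mem_filter.1 h).2⟩,
      fun h => Finset.mem_filter.2 ⟨Finset.mem_univ _, ((@Finset.mem_filter (Sym2 (Option H.V)) _ _ _ _).1 h).2⟩⟩
  · rfl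


lemma addLeaf_admissible_iff (H : PCG q) (v : H.V) (ℓ : Fin q) (ψ' : (H.addLeaf v ℓ).V → Fin q) :
    (H.addLeaf v ℓ).admissible ψ' ↔ ψ' none = ℓ ∧ H.admissible (fun u => ψ' (some u)) := by
  unfold admissible addLeaf
  simp only [Finset.mem_insert, Finset.mem_image]
  constructor
  · intro hadm
    refine ⟨hadm none (Or.inl rfl), fun u hu => hadm (some u) (Or.inr ⟨u, hu, rfl⟩)⟩
  · rintro ⟨h0, hs⟩ u hu
    rcases hu with rfl | ⟨u', hu', rfl⟩
    · exact h0
    · exact hs u' hu'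

lemma Zcr_addLeaf (H : PCG q) (v : H.V) (ℓ j : Fin q) (w : ℝ) :
    (H.addLeaf v ℓ).Zcr (some v) j w = (if j = ℓ then w else 1) * H.Zcr v j w := by
  unfold Zcr
  rw [Finset.mul_sum]
  refine Finset.sum_nbij' (fun ψ' => fun u => ψ' (some u)) (fun ψ => fun o => o.elim ℓ ψ)
    ?_ ?_ ?_ ?_ ?_
  · intro ψ' hm
    simp only [Finset.mem_filter, Finset.mem_univ, true_and, addLeaf_admissible_iff] at hm ⊢
    exact ⟨hm.1.2, hm.2⟩
  · intro ψ hm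
    simp only [Finset.mem_filter, Finset.mem_univ, true_and, addLeaf_admissible_iff] at hm ⊢
    exact ⟨⟨rfl, hm.1⟩, hm.2⟩
  · intro ψ' hm
    simp only [Finset.mem_filter, Finset.mem_univ, true_and, addLeaf_admissible_iff] at hm
    funext o
    cases o with
    | none => exact (hm.1.1).symm
    | some u => rfl
  · intro ψ hm
    rfl
  · intro ψ' hm
    simp only [Finset.mem_filter, Finset.mem_univ, true_and, addLeaf_admissible_iff] at hm
    have hmono := H.mono_addLeaf v ℓ (fun u => ψ' (some u)) ψ' (fun u => rfl) hm.1.1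
    rw [hmono, pow_add]
    simp only [hm.2]
    rcases eq_or_ne j ℓ with rfl | hne
    · simp [mul_comm]
    · simp [hne, mul_comm]


lemma Zcr_nonneg (H : PCG q) (v : H.V) (j : Fin q) {w : ℝ} (hw : 0 ≤ w) :
    0 ≤ H.Zcr v j w :=
  Finset.sum_nonneg fun _ _ => pow_nonneg hw _

lemma Zr_addLeaf (H : PCG q) (v : H.V) (ℓ : Fin q) (w : ℝ) :
    (H.addLeaf v ℓ).Zr w = H.Zr w - (1 - w) * H.Zcr v ℓ w := by
  rw [(H.addLeaf v ℓ).Zr_eq_sum_Zcr (some v), H.Zr_eq_sum_Zcr v]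
  have h : ∀ k : Fin q, (H.addLeaf v ℓ).Zcr (some v) k w
      = H.Zcr v k w - (if k = ℓ then (1 - w) * H.Zcr v ℓ w else 0) := by
    intro k
    rw [Zcr_addLeaf]
    split_ifs with hk
    · rw [hk]; ring
    · ring
  rw [Finset.sum_congr rfl fun k _ => h k, Finset.sum_sub_distrib,
    Finset.sum_ite_eq' Finset.univ ℓ (fun _ => (1 - w) * H.Zcr v ℓ w)]
  simp

lemma sum_split (hq : 1 ≤ q) (f : Fin q → ℝ) :
    ∑ k : Fin q, f k
      = (∑ j : Fin (q - 1), f (Fin.castLE (Nat.sub_le q 1) j)) + f ⟨q - 1, by omega⟩ := by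
  obtain ⟨n, rfl⟩ : ∃ n, q = n + 1 := ⟨q - 1, by omega⟩
  exact Fin.sum_univ_castSucc f

end PCG

lemma abs_sum_le_sum_abs_mul {n : ℕ} (c : Fin n → ℝ) (y : Fin n → ℂ) :
    ‖∑ j, (c j : ℂ) * y j‖ ≤ (∑ j, |c j|) * ‖y‖ := by
  calc ‖∑ j, (c j : ℂ) * y j‖ ≤ ∑ j, ‖(c j : ℂ) * y j‖ :=
        norm_sum_le _ _
    _ ≤ ∑ j, |c j| * ‖y‖ := by
        refine Finset.sum_le_sum fun j _ => ?_
        rw [norm_mul, Complex.norm_real, Real.norm_eq_abs]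
        refine mul_le_mul_of_nonneg_left ?_ (abs_nonneg _)
        exact norm_le_pi_norm y j
    _ = (∑ j, |c j|) * ‖y‖ := (Finset.sum_mul _ _ _).symm

namespace PCG

lemma Pr_addLeaf {q : ℕ} (H : PCG q) (v : H.V) (ℓ k : Fin q) (w : ℝ) :
    (H.addLeaf v ℓ).Pr (some v) k w
      = (if k = ℓ then w else 1) * H.Zcr v k w / (H.Zr w - (1 - w) * H.Zcr v ℓ w) := by
  unfold Pr
  rw [Zcr_addLeaf, Zr_addLeaf]

end PCG

set_option maxHeartbeats 2000000 in
/-- Lemma 4.3: bounding the inner product of `P_{G,v}(w)` with a complex vector. -/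
theorem replace_by_prob (q : ℕ) (hq : 2 ≤ q) (H : PCG q) (v : H.V) (hv : v ∉ H.S)
    (w : ℝ) (hw : w ∈ Set.Icc (0 : ℝ) 1) (hZ : 0 < H.Zr w)
    (hZ1 : 0 < (H.addLeaf v ⟨0, by omega⟩).Zr w)
    (hZq : 0 < (H.addLeaf v ⟨q - 1, by omega⟩).Zr w)
    (x xh : Fin (q - 1) → ℂ)
    (hxh1 : xh ⟨0, by omega⟩ = - x ⟨0, by omega⟩)
    (hxh : ∀ j : Fin (q - 1), (j : ℕ) ≠ 0 → xh j = x j - x ⟨0, by omega⟩) :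
    (H.Zcr v ⟨0, by omega⟩ w ≤ H.Zcr v ⟨q - 1, by omega⟩ w →
      ‖∑ j : Fin (q - 1), (H.Pvec v w j : ℂ) * x j‖ ≤
        (1 - w) * (H.addLeaf v ⟨0, by omega⟩).Pr (some v) ⟨q - 1, by omega⟩ w * ‖x‖) ∧
    (H.Zcr v ⟨q - 1, by omega⟩ w < H.Zcr v ⟨0, by omega⟩ w →
      ‖∑ j : Fin (q - 1), (H.Pvec v w j : ℂ) * x j‖ ≤
        (1 - w) * (H.addLeaf v ⟨q - 1, by omega⟩).Pr (some v) ⟨0, by omega⟩ w * ‖xh‖) := by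
  obtain ⟨hw0, hw1⟩ := hw
  have p0 : 0 < q := by omega
  have pq : q - 1 < q := by omega
  have p0' : 0 < q - 1 := by omega
  set ℓ1 : Fin q := ⟨0, p0⟩ with hℓ1def
  set ℓq : Fin q := ⟨q - 1, pq⟩ with hℓqdef
  have hne : ℓq ≠ ℓ1 := by
    simp only [hℓ1def, hℓqdef, Fin.mk.injEq, ne_eq]
    omega
  have hne' : ℓ1 ≠ ℓq := hne.symm
  set j₀ : Fin (q - 1) := ⟨0, p0'⟩ with hj₀def
  have hj₀0 : (j₀ : ℕ) = 0 := rfl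
  set cst : Fin (q - 1) → Fin q := Fin.castLE (Nat.sub_le q 1) with hcstdef
  set a : ℝ := H.Zcr v ℓ1 w with hadef
  set b : ℝ := H.Zcr v ℓq w with hbdef
  set M : ℝ := ∑ j ∈ Finset.univ.erase j₀, H.Zcr v (cst j) w with hMdef
  have ha : 0 ≤ a := H.Zcr_nonneg v ℓ1 hw0
  have hb : 0 ≤ b := H.Zcr_nonneg v ℓq hw0
  have hM : 0 ≤ M := Finset.sum_nonneg fun j _ => H.Zcr_nonneg v _ hw0
  have hA : H.Zr w = a + b + M := by
    rw [H.Zr_eq_sum_Zcr v, PCG.sum_split (by omega),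
      ← Finset.add_sum_erase Finset.univ (fun j => H.Zcr v (cst j) w) (Finset.mem_univ j₀)]
    have h1 : H.Zcr v (cst j₀) w = a := rfl
    have h2 : H.Zcr v ⟨q - 1, by omega⟩ w = b := rfl
    rw [h1, h2, ← hMdef]
    ring
  set D1 : ℝ := a + b + M - (1 - w) * a with hD1def
  set Dq : ℝ := a + b + M - (1 - w) * b with hDqdef
  have hD1 : 0 < D1 := by
    have h := hZ1
    rw [PCG.Zr_addLeaf, hA] at h
    exact h
  have hDq : 0 < Dq := by
    have h := hZq
    rw [PCG.Zr_addLeaf, hA] at h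
    exact h
  have hPr1 : (H.addLeaf v ℓ1).Pr (some v) ℓq w = b / D1 := by
    rw [PCG.Pr_addLeaf, if_neg hne, hA, ← hadef, ← hbdef, ← hD1def, one_mul]
  have hPrq : (H.addLeaf v ℓq).Pr (some v) ℓ1 w = a / Dq := by
    rw [PCG.Pr_addLeaf, if_neg hne', hA, ← hadef, ← hbdef, ← hDqdef, one_mul]
  set c : Fin (q - 1) → ℝ :=
    fun j => (if (j : ℕ) = 0 then w else 1) * H.Zcr v (cst j) w / D1
      - H.Zcr v (cst j) w / Dq with hcdef
  have hPvec : ∀ j, H.Pvec v w j = c j := by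
    intro j
    unfold PCG.Pvec
    rw [PCG.Pr_addLeaf, PCG.Pr_addLeaf, hA, ← hadef, ← hbdef, ← hD1def, ← hDqdef]
    have hq2 : ¬ (Fin.castLE (Nat.sub_le q 1) j = ℓq) := by
      simp only [hℓqdef, Fin.ext_iff, Fin.coe_castLE]
      have := j.2
      omega
    rw [if_neg hq2, one_mul]
    simp only [hcdef]
    by_cases hj : (j : ℕ) = 0
    · rw [if_pos (show Fin.castLE (Nat.sub_le q 1) j = ℓ1 by
        simp only [hℓ1def, Fin.ext_iff, Fin.coe_castLE]; exact hj), if_pos hj]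
    · rw [if_neg (show ¬ Fin.castLE (Nat.sub_le q 1) j = ℓ1 by
        simp only [hℓ1def, Fin.ext_iff, Fin.coe_castLE]; exact hj), if_neg hj]
  have hcj₀ : c j₀ = w * a / D1 - a / Dq := by
    simp only [hcdef]
    rw [if_pos hj₀0]
    rfl
  have hcval : ∀ j : Fin (q - 1), (j : ℕ) ≠ 0 → c j = H.Zcr v (cst j) w / D1 - H.Zcr v (cst j) w / Dq := by
    intro j hj
    simp only [hcdef]
    rw [if_neg hj, one_mul]
  have hcnn : ∀ j, 0 ≤ H.Zcr v (cst j) w := fun j => H.Zcr_nonneg v _ hw0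
  have hcer : ∑ j ∈ Finset.univ.erase j₀, c j = M / D1 - M / Dq := by
    have h1 : ∀ j ∈ Finset.univ.erase j₀, c j
        = H.Zcr v (cst j) w / D1 - H.Zcr v (cst j) w / Dq := by
      intro j hj
      refine hcval j ?_
      rw [Finset.mem_erase] at hj
      simp only [hj₀def, Fin.ext_iff, ne_eq] at hj
      exact hj.1
    rw [Finset.sum_congr rfl h1, Finset.sum_sub_distrib, ← Finset.sum_div, ← Finset.sum_div,
      ← hMdef]
  have hMer : ∑ j ∈ Finset.univ.erase j₀, H.Zcr v (cst j) w = M := rfl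
  have hgoalrw : (∑ j : Fin (q - 1), (H.Pvec v w j : ℂ) * x j)
      = ∑ j : Fin (q - 1), (c j : ℂ) * x j := by
    refine Finset.sum_congr rfl fun j _ => ?_
    rw [hPvec]
  have hj₀eq : ∀ j : Fin (q - 1), (j : ℕ) = 0 → j = j₀ := by
    intro j hj
    exact Fin.ext (hj.trans hj₀0.symm)
  clear_value c D1 Dq a b M cst j₀ ℓ1 ℓq
  clear hcdef hadef hbdef hMdef hcstdef hj₀def hℓ1def hℓqdef hZ1 hZq hZ
  have hD1ne : D1 ≠ 0 := hD1.ne'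
  have hDqne : Dq ≠ 0 := hDq.ne'
  have hsumc : ∑ j, c j = (w * a / D1 - a / Dq) + (M / D1 - M / Dq) := by
    rw [← Finset.add_sum_erase Finset.univ c (Finset.mem_univ j₀), hcj₀, hcer]
  refine ⟨fun hab₀ => ?_, fun hab₀ => ?_⟩
  · -- case a ≤ b
    have hab : a ≤ b := hab₀
    have hcle : ∀ j, c j ≤ 0 := by
      intro j
      by_cases hj : (j : ℕ) = 0
      · rw [hj₀eq j hj, hcj₀, sub_nonpos, div_le_div_iff₀ hD1 hDq]
        have hkey : 0 ≤ D1 - w * Dq := by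
          simp only [hD1def, hDqdef]
          nlinarith [mul_nonneg (sub_nonneg.2 hw1) hb, mul_nonneg (sub_nonneg.2 hw1) hM,
            mul_nonneg (mul_nonneg hw0 (sub_nonneg.2 hw1)) hb]
        nlinarith [mul_nonneg ha hkey]
      · rw [hcval j hj, sub_nonpos, div_le_div_iff₀ hD1 hDq]
        have hkey : Dq ≤ D1 := by
          simp only [hD1def, hDqdef]
          nlinarith [mul_nonneg (sub_nonneg.2 hw1) (sub_nonneg.2 hab)]
        nlinarith [mul_nonneg (hcnn j) (sub_nonneg.2 hkey)]
    have hsumabs : ∑ j, |c j| = (a / Dq - w * a / D1) + (M / Dq - M / D1) := by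
      have h1 : ∀ j ∈ (Finset.univ : Finset (Fin (q - 1))), |c j| = -c j :=
        fun j _ => abs_of_nonpos (hcle j)
      rw [Finset.sum_congr rfl h1, Finset.sum_neg_distrib, hsumc]
      ring
    have hkey : (a / Dq - w * a / D1) + (M / Dq - M / D1) ≤ (1 - w) * (b / D1) := by
      have h1 : (a / Dq - w * a / D1) + (M / Dq - M / D1)
          = ((a + M) * D1 - (w * a + M) * Dq) / (Dq * D1) := by
        field_simp
        ring
      have h2 : (1 - w) * (b / D1) = ((1 - w) * b * Dq) / (Dq * D1) := by
        field_simp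
      rw [h1, h2, div_le_div_iff_of_pos_right (mul_pos hDq hD1)]
      simp only [hD1def, hDqdef]
      nlinarith [mul_nonneg (mul_nonneg (mul_nonneg hw0 (sub_nonneg.2 hw1)) hb)
        (sub_nonneg.2 hab)]
    calc ‖∑ j : Fin (q - 1), (H.Pvec v w j : ℂ) * x j‖
        = ‖∑ j : Fin (q - 1), (c j : ℂ) * x j‖ := by rw [hgoalrw]
      _ ≤ (∑ j, |c j|) * ‖x‖ := abs_sum_le_sum_abs_mul c x
      _ ≤ ((1 - w) * (b / D1)) * ‖x‖ := by
          refine mul_le_mul_of_nonneg_right ?_ (norm_nonneg x)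
          rw [hsumabs]
          exact hkey
      _ = (1 - w) * (H.addLeaf v ℓ1).Pr (some v) ℓq w * ‖x‖ := by rw [hPr1, mul_assoc]
  · -- case b < a
    have hba : b ≤ a := le_of_lt hab₀
    have hD1leDq : D1 ≤ Dq := by
      simp only [hD1def, hDqdef]
      nlinarith [mul_nonneg (sub_nonneg.2 hw1) (sub_nonneg.2 hba)]
    set c' : Fin (q - 1) → ℝ :=
      fun j => if (j : ℕ) = 0 then -(∑ i, c i) else c j with hc'def
    have hcge : ∀ j ∈ Finset.univ.erase j₀, 0 ≤ c j := by
      intro j hj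
      have hj0 : ¬ ((j : ℕ) = 0) := fun h => (Finset.mem_erase.1 hj).1 (hj₀eq j h)
      rw [hcval j hj0, sub_nonneg, div_le_div_iff₀ hDq hD1]
      nlinarith [mul_nonneg (hcnn j) (sub_nonneg.2 hD1leDq)]
    have hc'0 : 0 ≤ -(∑ i, c i) := by
      rw [hsumc]
      have h1 : (w * a + M) / D1 ≤ (a + M) / Dq := by
        rw [div_le_div_iff₀ hD1 hDq]
        simp only [hD1def, hDqdef]
        nlinarith [mul_nonneg (mul_nonneg (sub_nonneg.2 hw1) hb)
          (by nlinarith [mul_nonneg hw0 ha] : (0:ℝ) ≤ a + w * a + M)]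
      have h2 : (w * a + M) / D1 = w * a / D1 + M / D1 := by ring
      have h3 : (a + M) / Dq = a / Dq + M / Dq := by ring
      linarith [h1, h2.le, h3.le]
    have hrw2 : (∑ j : Fin (q - 1), (c j : ℂ) * x j)
        = ∑ j : Fin (q - 1), (c' j : ℂ) * xh j := by
      rw [← Finset.add_sum_erase Finset.univ (fun j => (c j : ℂ) * x j) (Finset.mem_univ j₀),
        ← Finset.add_sum_erase Finset.univ (fun j => (c' j : ℂ) * xh j) (Finset.mem_univ j₀)]
      have e1 : ∀ j ∈ Finset.univ.erase j₀,
          (c' j : ℂ) * xh j = (c j : ℂ) * x j - (c j : ℂ) * x j₀ := by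
        intro j hj
        have hj0 : ¬ ((j : ℕ) = 0) := fun h => (Finset.mem_erase.1 hj).1 (hj₀eq j h)
        simp only [hc'def]
        rw [if_neg hj0, hxh j hj0]
        ring
      rw [Finset.sum_congr rfl e1, Finset.sum_sub_distrib, ← Finset.sum_mul]
      have e2 : (c' j₀ : ℂ) * xh j₀ = ((∑ i, c i : ℝ) : ℂ) * x j₀ := by
        simp only [hc'def]
        rw [if_pos hj₀0, hxh1]
        push_cast
        ring
      have e3 : ((∑ i, c i : ℝ) : ℂ) = (c j₀ : ℂ) + ∑ j ∈ Finset.univ.erase j₀, (c j : ℂ) := by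
        rw [← Finset.add_sum_erase Finset.univ c (Finset.mem_univ j₀)]
        push_cast
        ring
      rw [e2, e3]
      ring
    have hsumabs : ∑ j, |c' j| = a / Dq - w * a / D1 := by
      rw [← Finset.add_sum_erase Finset.univ (fun j => |c' j|) (Finset.mem_univ j₀)]
      have h1 : |c' j₀| = -(∑ i, c i) := by
        have h : c' j₀ = -(∑ i, c i) := by simp only [hc'def]; rw [if_pos hj₀0]
        rw [h, abs_of_nonneg hc'0]
      have h2 : ∀ j ∈ Finset.univ.erase j₀, |c' j| = c j := by
        intro j hj
        have hj0 : ¬ ((j : ℕ) = 0) := fun h => (Finset.mem_erase.1 hj).1 (hj₀eq j h)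
        have h : c' j = c j := by simp only [hc'def]; rw [if_neg hj0]
        rw [h, abs_of_nonneg (hcge j hj)]
      rw [h1, Finset.sum_congr rfl h2, hcer, hsumc]
      ring
    have hkey : a / Dq - w * a / D1 ≤ (1 - w) * (a / Dq) := by
      have h1 : w * a / Dq ≤ w * a / D1 := by
        rw [div_le_div_iff₀ hDq hD1]
        nlinarith [mul_nonneg (mul_nonneg hw0 ha) (sub_nonneg.2 hD1leDq)]
      have h2 : (1 - w) * (a / Dq) = a / Dq - w * a / Dq := by ring
      linarith
    calc ‖∑ j : Fin (q - 1), (H.Pvec v w j : ℂ) * x j‖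
        = ‖∑ j : Fin (q - 1), (c' j : ℂ) * xh j‖ := by rw [hgoalrw, hrw2]
      _ ≤ (∑ j, |c' j|) * ‖xh‖ := abs_sum_le_sum_abs_mul c' xh
      _ ≤ ((1 - w) * (a / Dq)) * ‖xh‖ := by
          refine mul_le_mul_of_nonneg_right ?_ (norm_nonneg xh)
          rw [hsumabs]
          exact hkey
      _ = (1 - w) * (H.addLeaf v ℓq).Pr (some v) ℓ1 w * ‖xh‖ := by rw [hPrq, mul_assoc]
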